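/- If at some time t the water depth h_i(t) = 0 in a cell i and the mass source satisfies M_i ≥ 0 when h_i = 0, then d/dt(θ_i h_i)(t) ≥ 0 under the upwind semidiscrete scheme; consequently the semidiscrete ODE system preserves nonnegativity of the water depth function h. -/
import Mathlib

/-- h-positivity of the upwind semidiscrete scheme: if h_i(t) = 0 and
M_i(t) ≥ 0, then d/dt (θ_i h_i)(t) ≥ 0. -/
theorem semidiscrete_h_positivity
    {J : Type*} (N : Finset J)
    (σ θi : ℝ) (hσ : 0 < σ) (hθi : θi ∈ Set.Ioc (0:ℝ) 1)
    (l : J → ℝ) (hl : ∀ j ∈ N, 0 < l j)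
    (vnp vnm : J → ℝ → ℝ)                       -- (v_n)⁺ and (v_n)⁻ on each interface
    (hvnp : ∀ j ∈ N, ∀ s, 0 ≤ vnp j s)
    (hvnm : ∀ j ∈ N, ∀ s, 0 ≤ vnm j s)
    (θh : J → ℝ → ℝ)                            -- neighbor values θ_j h_j ≥ 0
    (hθh : ∀ j ∈ N, ∀ s, 0 ≤ θh j s)
    (hi : ℝ → ℝ) (M : ℝ → ℝ)
    -- the semidiscrete upwind mass-balance ODE in cell i
    (hODE : ∀ s, σ * deriv (fun u => θi * hi u) s
      = - θi * hi s * ∑ j ∈ N, l j * vnp j s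
        + ∑ j ∈ N, l j * θh j s * vnm j s
        + σ * M s)
    (t : ℝ) (hdry : hi t = 0) (hM : 0 ≤ M t) :
    0 ≤ deriv (fun u => θi * hi u) t := by
  have h := hODE t
  rw [hdry] at h
  have hsum : 0 ≤ ∑ j ∈ N, l j * θh j t * vnm j t :=
    Finset.sum_nonneg fun j hj =>
      mul_nonneg (mul_nonneg (hl j hj).le (hθh j hj t)) (hvnm j hj t)
  have : 0 ≤ σ * deriv (fun u => θi * hi u) t := by
    rw [h]; simp only [mul_zero, neg_mul, zero_mul, neg_zero, zero_add]
    exact add_nonneg hsum (mul_nonneg hσ.le hM)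
  exact nonneg_of_mul_nonneg_right this hσ
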